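/- Let p = p(θ₀) for some θ₀ ∈ Θ, let C ⊆ Θ be compact with inf_{θ ∈ Θ∖C} ρ(p,θ) > ρ(p,θ*) for some θ* ∈ C, and suppose θ₀ is the unique global minimizer of ρ(p,·) over Θ. Assume G and G′ are bounded on [−1,∞) and θ ↦ p_k(θ) is continuous on C for each k. If (q_n) ⊆ Γ satisfies q_{n,k} → p_k(θ₀) as n → ∞ for every k, then for all sufficiently large n the map θ ↦ ρ(q_n,θ) attains a global minimum over Θ, and any sequence of such global minimizers converges to θ₀. (This is the pathwise statement underlying the strong consistency of the minimum disparity estimator based on a strongly consistent nonparametric estimator of the offspring law.) -/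

import Mathlib

open Filter Topology

/-- `q` is a probability distribution on the nonnegative integers. -/
def IsDistrib (q : ℕ → ℝ) : Prop := (∀ k, 0 ≤ q k) ∧ HasSum q 1

/-- The disparity measure `ρ(q,θ) = Σ_k G(q_k/p_k(θ) - 1) · p_k(θ)`. -/
noncomputable def disparity (G : ℝ → ℝ) (p : ℝ → ℕ → ℝ) (q : ℕ → ℝ) (θ : ℝ) : ℝ :=
  ∑' k, G (q k / p θ k - 1) * p θ k

lemma lipG {G : ℝ → ℝ} {M : ℝ} (hG : ContDiffOn ℝ 3 G (Set.Ici (-1)))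
    (hM : ∀ t ∈ Set.Ici (-1:ℝ), |deriv G t| ≤ M) :
    ∀ x ∈ Set.Ici (-1:ℝ), ∀ y ∈ Set.Ici (-1:ℝ), |G x - G y| ≤ M * |x - y| := by
  have hdiff : ∀ t ∈ Set.Ioi (-1:ℝ), HasDerivAt G (deriv G t) t := by
    intro t ht
    exact ((hG.differentiableOn (by norm_num)).differentiableAt (Ici_mem_nhds ht)).hasDerivAt
  have key : ∀ x ∈ Set.Ioi (-1:ℝ), ∀ y ∈ Set.Ioi (-1:ℝ), |G x - G y| ≤ M * |x - y| := by
    intro x hx y hy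
    have := Convex.norm_image_sub_le_of_norm_hasDerivWithin_le
      (f := G) (f' := fun t => deriv G t) (s := Set.Ioi (-1:ℝ))
      (fun t ht => (hdiff t ht).hasDerivWithinAt)
      (fun t ht => by simpa [Real.norm_eq_abs] using hM t (Set.mem_Ici.2 (le_of_lt (Set.mem_Ioi.1 ht))))
      (convex_Ioi _) hy hx
    simpa [Real.norm_eq_abs] using this
  intro x hx y hy
  have cont := hG.continuousOn
  have haux : ∀ z : ℝ, z ∈ Set.Ici (-1:ℝ) →
      Tendsto (fun t : ℝ => G (z + t)) (𝓝[>] 0) (𝓝 (G z)) := by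
    intro z hz
    have h1 : Tendsto (fun t : ℝ => z + t) (𝓝[>] (0:ℝ)) (𝓝[Set.Ici (-1:ℝ)] z) := by
      apply tendsto_nhdsWithin_of_tendsto_nhds_of_eventually_within
      · have : Tendsto (fun t : ℝ => z + t) (𝓝 0) (𝓝 (z + 0)) :=
          tendsto_const_nhds.add tendsto_id
        simpa using this.mono_left nhdsWithin_le_nhds
      · filter_upwards [self_mem_nhdsWithin] with t ht
        have := Set.mem_Ici.1 hz
        have ht' : (0:ℝ) < t := ht
        exact Set.mem_Ici.2 (by linarith)
    exact (cont z hz).tendsto.comp h1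
  have hlim : Tendsto (fun t : ℝ => |G (x + t) - G (y + t)|) (𝓝[>] (0:ℝ))
      (𝓝 |G x - G y|) := ((haux x hx).sub (haux y hy)).abs
  refine le_of_tendsto hlim ?_
  filter_upwards [self_mem_nhdsWithin] with t ht
  have ht' : (0:ℝ) < t := ht
  have hx' := Set.mem_Ici.1 hx
  have hy' := Set.mem_Ici.1 hy
  calc |G (x + t) - G (y + t)| ≤ M * |x + t - (y + t)| :=
        key _ (by simp; linarith) _ (by simp; linarith)
    _ = M * |x - y| := by ring_nf

/-- pathwise consistency of the MDE: if `q_{n,k} → p_k(θ₀)` for every `k`,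
then the minimizers of `ρ(q_n,·)` eventually exist and converge to `θ₀`, the unique
global minimizer of `ρ(p(θ₀),·)`. -/
theorem stmt_5
    (Θ : Set ℝ) (p : ℝ → ℕ → ℝ) (G : ℝ → ℝ) (C : Set ℝ) (θs θ₀ : ℝ)
    (qn : ℕ → ℕ → ℝ)
    (hp : ∀ θ ∈ Θ, IsDistrib (p θ)) (hppos : ∀ θ ∈ Θ, ∀ k, 0 < p θ k)
    (hG3 : ContDiffOn ℝ 3 G (Set.Ici (-1)))
    (hGconv : StrictConvexOn ℝ (Set.Ici (-1)) G) (hG0 : G 0 = 0)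
    (hθ₀ : θ₀ ∈ Θ) (hqn : ∀ n, IsDistrib (qn n))
    (hC : IsCompact C) (hCsub : C ⊆ Θ) (hθs : θs ∈ C)
    (hinf : ∃ c, disparity G p (p θ₀) θs < c ∧ ∀ θ ∈ Θ \ C, c ≤ disparity G p (p θ₀) θ)
    (hθ₀min : ∀ θ ∈ Θ, disparity G p (p θ₀) θ₀ ≤ disparity G p (p θ₀) θ)
    (hθ₀uniq : ∀ θ₁ ∈ Θ,
      (∀ θ ∈ Θ, disparity G p (p θ₀) θ₁ ≤ disparity G p (p θ₀) θ) → θ₁ = θ₀)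
    (hGbdd : ∃ M, ∀ t ∈ Set.Ici (-1:ℝ), |G t| ≤ M ∧ |deriv G t| ≤ M)
    (hpcont : ∀ k, ContinuousOn (fun θ => p θ k) C)
    (hconv : ∀ k, Tendsto (fun n => qn n k) atTop (𝓝 (p θ₀ k))) :
    (∀ᶠ n in atTop, ∃ θ ∈ Θ, ∀ t ∈ Θ, disparity G p (qn n) θ ≤ disparity G p (qn n) t) ∧
    ∀ θn : ℕ → ℝ,
      (∀ᶠ n in atTop, θn n ∈ Θ ∧
        ∀ t ∈ Θ, disparity G p (qn n) (θn n) ≤ disparity G p (qn n) t) →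
      Tendsto θn atTop (𝓝 θ₀) := by
  obtain ⟨M, hM⟩ := hGbdd
  have lip := lipG hG3 (fun t ht => (hM t ht).2)
  have hPd : IsDistrib (p θ₀) := hp θ₀ hθ₀
  -- membership in Ici (-1)
  have hδmem : ∀ (q : ℕ → ℝ), (∀ k, 0 ≤ q k) → ∀ θ ∈ Θ, ∀ k,
      q k / p θ k - 1 ∈ Set.Ici (-1:ℝ) := by
    intro q hq θ hθ k
    have : 0 ≤ q k / p θ k := div_nonneg (hq k) (hppos θ hθ k).le
    exact Set.mem_Ici.2 (by linarith)
  -- summability of the disparity series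
  have hsumm : ∀ (q : ℕ → ℝ), (∀ k, 0 ≤ q k) → ∀ θ ∈ Θ,
      Summable (fun k => G (q k / p θ k - 1) * p θ k) := by
    intro q hq θ hθ
    apply Summable.of_norm_bounded (((hp θ hθ).2.summable).mul_left M)
    intro k
    have hpk := hppos θ hθ k
    rw [Real.norm_eq_abs, abs_mul, abs_of_pos hpk]
    exact mul_le_mul_of_nonneg_right ((hM _ (hδmem q hq θ hθ k)).1) hpk.le
  -- Lemma B: uniform bound on the disparity difference
  have hdiffbd : ∀ (q q' : ℕ → ℝ), IsDistrib q → IsDistrib q' → ∀ θ ∈ Θ,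
      |disparity G p q θ - disparity G p q' θ| ≤ M * ∑' k, |q k - q' k| := by
    intro q q' hq hq' θ hθ
    have hs1 := hsumm q hq.1 θ hθ
    have hs2 := hsumm q' hq'.1 θ hθ
    have habs : Summable (fun k => |q k - q' k|) := by
      apply Summable.of_norm_bounded (hq.2.summable.add hq'.2.summable)
      intro k
      rw [Real.norm_eq_abs, abs_abs]
      calc |q k - q' k| ≤ |q k| + |q' k| := abs_sub _ _
        _ = q k + q' k := by rw [abs_of_nonneg (hq.1 k), abs_of_nonneg (hq'.1 k)]
    have hterm : ∀ k, |G (q k / p θ k - 1) * p θ k - G (q' k / p θ k - 1) * p θ k|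
        ≤ M * |q k - q' k| := by
      intro k
      have hpk := hppos θ hθ k
      have hl := lip _ (hδmem q hq.1 θ hθ k) _ (hδmem q' hq'.1 θ hθ k)
      have heq : |q k / p θ k - 1 - (q' k / p θ k - 1)| = |q k - q' k| / p θ k := by
        rw [show q k / p θ k - 1 - (q' k / p θ k - 1) = (q k - q' k) / p θ k by ring,
          abs_div, abs_of_pos hpk]
      rw [← sub_mul, abs_mul, abs_of_pos hpk]
      calc |G (q k / p θ k - 1) - G (q' k / p θ k - 1)| * p θ k
          ≤ (M * (|q k - q' k| / p θ k)) * p θ k := by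
            refine mul_le_mul_of_nonneg_right ?_ hpk.le
            rw [← heq]; exact hl
        _ = M * |q k - q' k| := by field_simp
    have hsub : Summable (fun k => G (q k / p θ k - 1) * p θ k
        - G (q' k / p θ k - 1) * p θ k) := hs1.sub hs2
    unfold disparity
    rw [← Summable.tsum_sub hs1 hs2]
    calc |∑' k, (G (q k / p θ k - 1) * p θ k - G (q' k / p θ k - 1) * p θ k)|
        ≤ ∑' k, |G (q k / p θ k - 1) * p θ k - G (q' k / p θ k - 1) * p θ k| := by
          simpa [Real.norm_eq_abs] using norm_tsum_le_tsum_norm (f := fun k =>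
            G (q k / p θ k - 1) * p θ k - G (q' k / p θ k - 1) * p θ k)
            (by simpa [Real.norm_eq_abs] using hsub.abs)
      _ ≤ ∑' k, M * |q k - q' k| := Summable.tsum_le_tsum hterm hsub.abs (habs.mul_left M)
      _ = M * ∑' k, |q k - q' k| := tsum_mul_left
  -- Scheffé's lemma
  have hg : ∀ n, Summable (fun k => max (p θ₀ k - qn n k) 0) := by
    intro n
    apply Summable.of_nonneg_of_le (fun k => le_max_right _ _)
      (fun k => max_le (by linarith [(hqn n).1 k]) (hPd.1 k)) hPd.2.summable
  have hgt : Tendsto (fun n => ∑' k, max (p θ₀ k - qn n k) 0) atTop (𝓝 0) := by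
    have := tendsto_tsum_of_dominated_convergence (𝓕 := atTop)
      (f := fun n k => max (p θ₀ k - qn n k) 0) (g := fun _ => (0:ℝ))
      (bound := fun k => p θ₀ k) hPd.2.summable
      (fun k => by
        have : Tendsto (fun n => max (p θ₀ k - qn n k) 0) atTop
            (𝓝 (max (p θ₀ k - p θ₀ k) 0)) :=
          (tendsto_const_nhds.sub (hconv k)).max tendsto_const_nhds
        simpa using this)
      (by
        filter_upwards with n k
        rw [Real.norm_eq_abs, abs_of_nonneg (le_max_right _ _)]
        exact max_le (by linarith [(hqn n).1 k]) (hPd.1 k))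
    simpa using this
  have hscheffe : Tendsto (fun n => ∑' k, |qn n k - p θ₀ k|) atTop (𝓝 0) := by
    have heq : ∀ n, (∑' k, |qn n k - p θ₀ k|) = 2 * ∑' k, max (p θ₀ k - qn n k) 0 := by
      intro n
      have hsub : HasSum (fun k => qn n k - p θ₀ k) 0 := by
        simpa using (hqn n).2.sub hPd.2
      have h1 : ∀ k, |qn n k - p θ₀ k|
          = (qn n k - p θ₀ k) + 2 * max (p θ₀ k - qn n k) 0 := by
        intro k
        rcases le_total (qn n k) (p θ₀ k) with h | h
        · rw [abs_of_nonpos (by linarith), max_eq_left (by linarith)]; ring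
        · rw [abs_of_nonneg (by linarith), max_eq_right (by linarith)]; ring
      calc (∑' k, |qn n k - p θ₀ k|)
          = ∑' k, ((qn n k - p θ₀ k) + 2 * max (p θ₀ k - qn n k) 0) := tsum_congr h1
        _ = (∑' k, (qn n k - p θ₀ k)) + ∑' k, 2 * max (p θ₀ k - qn n k) 0 :=
            Summable.tsum_add hsub.summable ((hg n).mul_left 2)
        _ = 0 + 2 * ∑' k, max (p θ₀ k - qn n k) 0 := by rw [hsub.tsum_eq, tsum_mul_left]
        _ = 2 * ∑' k, max (p θ₀ k - qn n k) 0 := by ring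
    rw [show (fun n => ∑' k, |qn n k - p θ₀ k|)
        = fun n => 2 * ∑' k, max (p θ₀ k - qn n k) 0 from funext heq]
    simpa using hgt.const_mul 2
  -- Lemma D: continuity of the disparity on C
  have hbd : ∀ (q : ℕ → ℝ), (∀ k, 0 ≤ q k) → ∀ θ ∈ Θ, ∀ k,
      |(G (q k / p θ k - 1) - G (-1)) * p θ k| ≤ M * q k := by
    intro q hq θ hθ k
    have hpk := hppos θ hθ k
    have hl := lip _ (hδmem q hq θ hθ k) (-1) (Set.mem_Ici.2 le_rfl)
    have heq : |q k / p θ k - 1 - (-1)| = q k / p θ k := by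
      rw [show q k / p θ k - 1 - (-1) = q k / p θ k by ring,
        abs_of_nonneg (div_nonneg (hq k) hpk.le)]
    rw [abs_mul, abs_of_pos hpk]
    calc |G (q k / p θ k - 1) - G (-1)| * p θ k
        ≤ (M * (q k / p θ k)) * p θ k := by
          refine mul_le_mul_of_nonneg_right ?_ hpk.le
          calc |G (q k / p θ k - 1) - G (-1)| ≤ M * |q k / p θ k - 1 - (-1)| := hl
            _ = M * (q k / p θ k) := by rw [heq]
      _ = M * q k := by field_simp
  have hcont : ∀ (q : ℕ → ℝ), IsDistrib q →
      ContinuousOn (fun θ => disparity G p q θ) C := by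
    intro q hq
    have key : ContinuousOn
        (fun θ => (∑' k, (G (q k / p θ k - 1) - G (-1)) * p θ k) + G (-1)) C := by
      refine ContinuousOn.add ?_ continuousOn_const
      apply continuousOn_tsum (u := fun k => M * q k)
      · intro k
        have hpk : ∀ θ ∈ C, p θ k ≠ 0 := fun θ hθ => (hppos θ (hCsub hθ) k).ne'
        have hc1 : ContinuousOn (fun θ => q k / p θ k - 1) C :=
          (continuousOn_const.div (hpcont k) hpk).sub continuousOn_const
        have hmaps : ∀ θ ∈ C, q k / p θ k - 1 ∈ Set.Ici (-1:ℝ) :=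
          fun θ hθ => hδmem q hq.1 θ (hCsub hθ) k
        exact ((hG3.continuousOn.comp hc1 hmaps).sub continuousOn_const).mul (hpcont k)
      · exact hq.2.summable.mul_left M
      · intro k θ hθ
        rw [Real.norm_eq_abs]
        exact hbd q hq.1 θ (hCsub hθ) k
    refine key.congr fun θ hθ => ?_
    have hθΘ := hCsub hθ
    have hs1 : Summable (fun k => (G (q k / p θ k - 1) - G (-1)) * p θ k) := by
      apply Summable.of_norm_bounded (hq.2.summable.mul_left M)
      intro k
      rw [Real.norm_eq_abs]
      exact hbd q hq.1 θ hθΘ k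
    have hs2 : HasSum (fun k => G (-1) * p θ k) (G (-1)) := by
      simpa using (hp θ hθΘ).2.mul_left (G (-1))
    unfold disparity
    calc (∑' k, G (q k / p θ k - 1) * p θ k)
        = ∑' k, ((G (q k / p θ k - 1) - G (-1)) * p θ k + G (-1) * p θ k) :=
          tsum_congr fun k => by ring
      _ = (∑' k, (G (q k / p θ k - 1) - G (-1)) * p θ k) + ∑' k, G (-1) * p θ k :=
          Summable.tsum_add hs1 hs2.summable
      _ = (∑' k, (G (q k / p θ k - 1) - G (-1)) * p θ k) + G (-1) := by rw [hs2.tsum_eq]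
  -- main argument
  obtain ⟨c, hac, hc⟩ := hinf
  set Sn : ℕ → ℝ := fun n => ∑' k, |qn n k - p θ₀ k| with hSndef
  have hkeyB : ∀ n, ∀ θ ∈ Θ,
      |disparity G p (qn n) θ - disparity G p (p θ₀) θ| ≤ M * Sn n :=
    fun n => hdiffbd (qn n) (p θ₀) (hqn n) hPd
  have hMS : Tendsto (fun n => M * Sn n) atTop (𝓝 0) := by
    simpa using hscheffe.const_mul M
  set a := disparity G p (p θ₀) θs with hadef
  have hexists : ∀ n, M * Sn n < (c - a) / 2 →
      ∃ θ ∈ Θ, ∀ t ∈ Θ, disparity G p (qn n) θ ≤ disparity G p (qn n) t := by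
    intro n hn
    obtain ⟨θm, hθmC, hθmmin⟩ := hC.exists_isMinOn ⟨θs, hθs⟩ (hcont (qn n) (hqn n))
    refine ⟨θm, hCsub hθmC, fun t ht => ?_⟩
    by_cases htC : t ∈ C
    · exact isMinOn_iff.1 hθmmin t htC
    · have h1 : disparity G p (qn n) θm ≤ disparity G p (qn n) θs :=
        isMinOn_iff.1 hθmmin θs hθs
      have h2 := abs_le.1 (hkeyB n θs (hCsub hθs))
      have h3 := abs_le.1 (hkeyB n t ht)
      have h4 := hc t ⟨ht, htC⟩
      linarith [h2.2, h3.1]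
  have hinC : ∀ n, M * Sn n < (c - a) / 2 →
      (θn : ℕ → ℝ) → (θn n ∈ Θ ∧ ∀ t ∈ Θ,
        disparity G p (qn n) (θn n) ≤ disparity G p (qn n) t) → θn n ∈ C := by
    intro n hn θn ⟨hΘn, hmin⟩
    by_contra hnot
    have h1 := hmin θs (hCsub hθs)
    have h2 := abs_le.1 (hkeyB n θs (hCsub hθs))
    have h3 := abs_le.1 (hkeyB n (θn n) hΘn)
    have h4 := hc (θn n) ⟨hΘn, hnot⟩
    linarith [h2.2, h3.1]
  constructor
  · filter_upwards [hMS.eventually (gt_mem_nhds (show (0:ℝ) < (c - a) / 2 by linarith))]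
      with n hn
    exact hexists n hn
  · intro θn hθn
    rw [Metric.tendsto_nhds]
    intro ε hε
    set K := C \ Metric.ball θ₀ ε with hKdef
    have hKcomp : IsCompact K := hC.diff Metric.isOpen_ball
    rcases K.eq_empty_or_nonempty with hKe | hKne
    · have hsubC : C ⊆ Metric.ball θ₀ ε := by
        intro x hx
        by_contra h
        exact (Set.eq_empty_iff_forall_notMem.1 hKe x) ⟨hx, h⟩
      filter_upwards [hMS.eventually (gt_mem_nhds (show (0:ℝ) < (c - a) / 2 by linarith)),
        hθn] with n h1 h2
      exact Metric.mem_ball.1 (hsubC (hinC n h1 θn h2))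
    · obtain ⟨θ', hθ'K, hθ'min⟩ :=
        hKcomp.exists_isMinOn hKne ((hcont (p θ₀) hPd).mono Set.diff_subset)
      have hθ'Θ : θ' ∈ Θ := hCsub hθ'K.1
      have hθ'ne : θ' ≠ θ₀ := by
        intro h
        exact hθ'K.2 (h ▸ Metric.mem_ball_self hε)
      have hm : disparity G p (p θ₀) θ₀ < disparity G p (p θ₀) θ' := by
        by_contra h
        push_neg at h
        exact hθ'ne (hθ₀uniq θ' hθ'Θ (fun t ht => le_trans h (hθ₀min t ht)))
      set m := disparity G p (p θ₀) θ' with hmdef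
      set η := min ((c - a) / 2) ((m - disparity G p (p θ₀) θ₀) / 2) with hηdef
      have hηpos : 0 < η := lt_min (by linarith) (by linarith)
      filter_upwards [hMS.eventually (gt_mem_nhds hηpos), hθn] with n h1 h2
      have hnC : θn n ∈ C := hinC n (lt_of_lt_of_le h1 (min_le_left _ _)) θn h2
      by_contra hd
      have hKmem : θn n ∈ K := ⟨hnC, by simpa [Metric.mem_ball] using hd⟩
      have h5 : m ≤ disparity G p (p θ₀) (θn n) := isMinOn_iff.1 hθ'min _ hKmem
      have h6 := abs_le.1 (hkeyB n (θn n) h2.1)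
      have h7 := abs_le.1 (hkeyB n θ₀ hθ₀)
      have h8 := h2.2 θ₀ hθ₀
      have h9 := min_le_right ((c - a) / 2) ((m - disparity G p (p θ₀) θ₀) / 2)
      linarith [h6.1, h7.2]
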